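/- Let Φ₁, …, Φ_n ∈ ℝ^n be linearly independent vectors and let r₁, …, r_n ∈ ℝ. Consider the optimization problem sup{ c : c ∈ ℝ, B ∈ ℝ^{n×n} symmetric positive semidefinite, rᵢ − c = Φᵢᵀ B Φᵢ for all 1 ≤ i ≤ n }. Then the supremum is attained and equals min_{1 ≤ i ≤ n} rᵢ; in particular, with zero trace regularization (λ = 0), the kernel sum-of-squares relaxation returns the lowest sampled function value. -/

import Mathlib

open Matrix

/-- **KSOS with zero regularization returns the lowest sampled value.**  Let
`Φ₁, …, Φ_n ∈ ℝ^n` be linearly independent and `r₁, …, r_n ∈ ℝ`.  Then the supremum of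
`{c : ∃ B symmetric PSD, rᵢ − c = Φᵢᵀ B Φᵢ for all i}` is attained and equals
`min_i rᵢ`. -/
theorem ksos_zero_regularization_eq_min {n : ℕ} (hn : 0 < n)
    (Φ : Fin n → (Fin n → ℝ)) (hΦ : LinearIndependent ℝ Φ) (r : Fin n → ℝ) :
    IsGreatest
      {c : ℝ | ∃ B : Matrix (Fin n) (Fin n) ℝ, B.PosSemidef ∧
        ∀ i, r i - c = Φ i ⬝ᵥ B *ᵥ Φ i}
      (⨅ i, r i) := by
  have : Nonempty (Fin n) := ⟨⟨0, hn⟩⟩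
  have hbdd : BddBelow (Set.range r) := Set.Finite.bddBelow (Set.finite_range r)
  constructor
  · -- membership
    set M : Matrix (Fin n) (Fin n) ℝ := of Φ with hM
    have hU : IsUnit M := linearIndependent_rows_iff_isUnit.mp hΦ
    have hInv : Invertible M := hU.invertible
    set d : Fin n → ℝ := fun i => r i - ⨅ j, r j with hd
    have hd0 : ∀ i, 0 ≤ d i := fun i => sub_nonneg.mpr (ciInf_le hbdd i)
    set B : Matrix (Fin n) (Fin n) ℝ := M⁻¹ * diagonal d * (M⁻¹)ᵀ with hBdef
    refine ⟨B, ?_, ?_⟩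
    · have hD : (diagonal d).PosSemidef := posSemidef_diagonal_iff.mpr hd0
      have h1 := hD.mul_mul_conjTranspose_same M⁻¹
      rwa [conjTranspose_eq_transpose_of_trivial] at h1
    · intro i
      have hMBMt : M * B * Mᵀ = diagonal d := by
        rw [hBdef]
        rw [show M * (M⁻¹ * diagonal d * (M⁻¹)ᵀ) * Mᵀ
            = (M * M⁻¹) * diagonal d * ((M⁻¹)ᵀ * Mᵀ) by
          simp only [Matrix.mul_assoc]]
        simp [Matrix.mul_inv_of_invertible, ← Matrix.transpose_mul]
      have hentry : (M * B * Mᵀ) i i = Φ i ⬝ᵥ B *ᵥ Φ i := by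
        simp [Matrix.mul_apply, dotProduct, mulVec, Finset.sum_mul, Finset.mul_sum, hM]
        rw [Finset.sum_comm]
        refine Finset.sum_congr rfl fun j _ => Finset.sum_congr rfl fun k _ => by ring
      rw [← hentry, hMBMt, diagonal_apply_eq]
  · -- upper bound
    rintro c ⟨B, hB, hc⟩
    refine le_ciInf fun i => ?_
    have := hB.dotProduct_mulVec_nonneg (Φ i)
    have h := hc i
    simp only [star_trivial] at this
    linarith
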